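/- arXiv:2210.17107 — 7 statements merged into one kernel-verified Lean document; each statement's English description precedes it below -/
import Mathlib

section
/- Let X be a real Hilbert space and F : X → X* satisfy (F1)–(F5). Let δ : X → [δ_min, δ_max] be any damping-parameter function with 0 < δ_min ≤ δ_max < 2α_{F'}/L. Then, for any initial guess u⁰ ∈ X, the damped Newton iterates u^{n+1} = u^n − δ(u^n) F'(u^n)^{-1} F(u^n) converge strongly in X to the unique solution u* ∈ X of F(u) = 0. -/
set_option maxHeartbeats 1000000

lemma dn_desc (g g' : ℝ → ℝ)
    (hg : ∀ t ∈ Set.Icc (0:ℝ) 1, HasDerivAt g (g' t) t)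
    (h : ∀ t ∈ Set.Ioo (0:ℝ) 1, g' t ≤ 0) : g 1 ≤ g 0 := by
  have hA : AntitoneOn g (Set.Icc 0 1) := by
    apply antitoneOn_of_deriv_nonpos (convex_Icc 0 1)
    · exact fun t ht => (hg t ht).continuousAt.continuousWithinAt
    · rw [interior_Icc]
      exact fun t ht => (hg t (Set.mem_Icc_of_Ioo ht)).differentiableAt.differentiableWithinAt
    · rw [interior_Icc]
      intro t ht
      rw [(hg t (Set.mem_Icc_of_Ioo ht)).deriv]
      exact h t ht
  exact hA (Set.left_mem_Icc.2 zero_le_one) (Set.right_mem_Icc.2 zero_le_one) zero_le_one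

lemma dn_asc (g g' : ℝ → ℝ)
    (hg : ∀ t ∈ Set.Icc (0:ℝ) 1, HasDerivAt g (g' t) t)
    (h : ∀ t ∈ Set.Ioo (0:ℝ) 1, 0 ≤ g' t) : g 0 ≤ g 1 := by
  have := dn_desc (fun t => -g t) (fun t => -g' t)
    (fun t ht => (hg t ht).neg) (fun t ht => neg_nonpos.2 (h t ht))
  simpa using this

lemma dn_shift {X : Type*} [NormedAddCommGroup X] [InnerProductSpace ℝ X]
    (H : X → ℝ) (F : X → StrongDual ℝ X)
    (hH : ∀ u v : X, HasDerivAt (fun t : ℝ => H (u + t • v)) (F u v) 0)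
    (u v : X) (t₀ : ℝ) :
    HasDerivAt (fun t : ℝ => H (u + t • v)) (F (u + t₀ • v) v) t₀ := by
  have hinner : HasDerivAt (fun t : ℝ => t - t₀) 1 t₀ := (hasDerivAt_id t₀).sub_const t₀
  have h := HasDerivAt.comp_of_eq t₀ (hH (u + t₀ • v) v) hinner (by simp)
  convert h using 2 with t
  · rfl
  · rfl
  · simp only [Function.comp, id_eq]
    congr 1
    module
  · ring



/-- Under (F1)–(F5), the damped Newton method with step sizes
`δ(uⁿ) ∈ [δ_min, δ_max] ⊆ (0, 2α_{F'}/L)` converges, for any initial guess,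
strongly to the unique solution `u⋆` of `F(u) = 0`. -/
theorem dampedNewton_converges
    {X : Type*} [NormedAddCommGroup X] [InnerProductSpace ℝ X] [CompleteSpace X]
    (F : X → StrongDual ℝ X) (F' : X → X ≃L[ℝ] StrongDual ℝ X)
    (G H : X → ℝ) (L ν αF' βF' : ℝ)
    (hL : 0 < L) (hν : 0 < ν) (hαF' : 0 < αF') (hβF' : 0 < βF')
    -- (F1) Lipschitz continuity
    (hLip : ∀ u v w : X, |F u w - F v w| ≤ L * ‖u - v‖ * ‖w‖)
    -- (F2) strong monotonicity
    (hMono : ∀ u v : X, ν * ‖u - v‖ ^ 2 ≤ F u (u - v) - F v (u - v))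
    -- (F3) Gateaux differentiability with uniformly coercive and bounded derivative
    (hGateaux : ∀ u v : X, HasDerivAt (fun t : ℝ => F (u + t • v)) (F' u v) 0)
    (hcoercive : ∀ u v : X, αF' * ‖v‖ ^ 2 ≤ F' u v v)
    (hbounded : ∀ u v w : X, F' u v w ≤ βF' * ‖v‖ * ‖w‖)
    -- (F4) G' (u) = F'(u)u, with G' weakly continuous
    (hG : ∀ u v : X, HasDerivAt (fun t : ℝ => G (u + t • v)) (F' u u v) 0)
    (hGweak : ∀ v : X, Continuous fun u : X => F' u u v)
    -- (F5) F is a potential operator with potential H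
    (hH : ∀ u v : X, HasDerivAt (fun t : ℝ => H (u + t • v)) (F u v) 0)
    -- damping strategy
    (δ : X → ℝ) (δmin δmax : ℝ)
    (hδmin : 0 < δmin) (hδminmax : δmin ≤ δmax) (hδmax : δmax < 2 * αF' / L)
    (hδ : ∀ u : X, δ u ∈ Set.Icc δmin δmax)
    -- damped Newton iterates (u 0 is an arbitrary initial guess)
    (u : ℕ → X)
    (hiter : ∀ n : ℕ, u (n + 1) = u n - δ (u n) • (F' (u n)).symm (F (u n))) :
    ∃ ustar : X, (∀ v : X, F ustar v = 0) ∧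
      (∀ w : X, (∀ v : X, F w v = 0) → w = ustar) ∧
      Filter.Tendsto u Filter.atTop (nhds ustar) := by
  -- Taylor-type upper bound from Lipschitz continuity
  have taylor : ∀ a p : X, H (a + p) ≤ H a + F a p + L / 2 * ‖p‖ ^ 2 := by
    intro a p
    have key := dn_desc
      (fun t => H (a + t • p) - t * (F a p) - t ^ 2 * (L / 2 * ‖p‖ ^ 2))
      (fun t => F (a + t • p) p - F a p - (2 * t) * (L / 2 * ‖p‖ ^ 2))
      (fun t _ => by
        have h1 := dn_shift H F hH a p t
        have h2 : HasDerivAt (fun s : ℝ => s * (F a p)) (F a p) t := by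
          simpa using (hasDerivAt_id t).mul_const (F a p)
        have h3 : HasDerivAt (fun s : ℝ => s ^ 2 * (L / 2 * ‖p‖ ^ 2))
            ((2 * t) * (L / 2 * ‖p‖ ^ 2)) t := by
          simpa using (hasDerivAt_pow 2 t).mul_const (L / 2 * ‖p‖ ^ 2)
        exact (h1.sub h2).sub h3)
      (fun t ht => by
        have hl := hLip (a + t • p) a p
        have : ‖a + t • p - a‖ = t * ‖p‖ := by
          rw [add_sub_cancel_left, norm_smul, Real.norm_eq_abs, abs_of_pos ht.1]
        rw [this] at hl
        have h4 : F (a + t • p) p - F a p ≤ L * (t * ‖p‖) * ‖p‖ :=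
          le_trans (le_abs_self _) hl
        nlinarith [sq_nonneg ‖p‖])
    simp only [one_smul, zero_smul, add_zero, one_pow, zero_pow, one_mul, zero_mul,
      sub_zero] at key
    linarith
  -- lower bound for H from strong monotonicity
  have lower : ∀ a : X, H 0 - ‖F 0‖ ^ 2 / (2 * ν) ≤ H a := by
    intro a
    have key := dn_asc
      (fun t => H ((0 : X) + t • a) - t * (F 0 a) - t ^ 2 * (ν / 2 * ‖a‖ ^ 2))
      (fun t => F ((0 : X) + t • a) a - F 0 a - (2 * t) * (ν / 2 * ‖a‖ ^ 2))
      (fun t _ => by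
        have h1 := dn_shift H F hH 0 a t
        have h2 : HasDerivAt (fun s : ℝ => s * (F 0 a)) (F 0 a) t := by
          simpa using (hasDerivAt_id t).mul_const (F 0 a)
        have h3 : HasDerivAt (fun s : ℝ => s ^ 2 * (ν / 2 * ‖a‖ ^ 2))
            ((2 * t) * (ν / 2 * ‖a‖ ^ 2)) t := by
          simpa using (hasDerivAt_pow 2 t).mul_const (ν / 2 * ‖a‖ ^ 2)
        exact (h1.sub h2).sub h3)
      (fun t ht => by
        have hm := hMono (t • a) 0
        simp only [sub_zero, map_smul, smul_eq_mul] at hm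
        have hna : ‖t • a‖ ^ 2 = t ^ 2 * ‖a‖ ^ 2 := by
          rw [norm_smul, Real.norm_eq_abs, abs_of_pos ht.1]; ring
        rw [hna] at hm
        have ht0 : 0 < t := ht.1
        have : ν * t * ‖a‖ ^ 2 ≤ F (t • a) a - F 0 a := by nlinarith
        simp only [zero_add]
        nlinarith)
    norm_num at key
    have hq : ‖F 0‖ ^ 2 / (2 * ν) * (2 * ν) = ‖F 0‖ ^ 2 :=
      div_mul_cancel₀ _ (by positivity)
    have hle : -(‖F 0‖ * ‖a‖) ≤ F 0 a := by
      have := (F 0).le_opNorm a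
      rw [Real.norm_eq_abs] at this
      linarith [neg_abs_le (F 0 a)]
    nlinarith [sq_nonneg (ν * ‖a‖ - ‖F 0‖), hq, hν, key, hle]
  -- the Newton direction
  set d : ℕ → X := fun n => (F' (u n)).symm (F (u n)) with hd
  have hFd : ∀ n, F (u n) = F' (u n) (d n) :=
    fun n => ((F' (u n)).apply_symm_apply _).symm
  have hFnorm : ∀ n, ‖F (u n)‖ ≤ βF' * ‖d n‖ := by
    intro n
    refine ContinuousLinearMap.opNorm_le_bound _ (by positivity) fun w => ?_
    rw [hFd n, Real.norm_eq_abs, abs_le]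
    constructor
    · have := hbounded (u n) (d n) (-w)
      simp only [map_neg, norm_neg] at this
      linarith
    · exact hbounded (u n) (d n) w
  set c := δmin * (αF' - L * δmax / 2) with hcdef
  have hLd : L * δmax < 2 * αF' := by
    rw [lt_div_iff₀ hL] at hδmax; linarith
  have hc : 0 < c := by
    apply mul_pos hδmin; nlinarith
  -- descent estimate
  have step : ∀ n, H (u (n + 1)) + c * ‖d n‖ ^ 2 ≤ H (u n) := by
    intro n
    obtain ⟨hδ1, hδ2⟩ := hδ (u n)
    have hδn0 : 0 < δ (u n) := lt_of_lt_of_le hδmin hδ1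
    have hu : u (n + 1) = u n + -(δ (u n) • d n) := by
      rw [hiter n, sub_eq_add_neg]
    have ht := taylor (u n) (-(δ (u n) • d n))
    rw [← hu] at ht
    have hFp : F (u n) (-(δ (u n) • d n)) = -(δ (u n) * (F' (u n) (d n) (d n))) := by
      rw [map_neg, map_smul, smul_eq_mul]
      congr 2
      rw [hFd n]
    have hnp : ‖-(δ (u n) • d n)‖ ^ 2 = δ (u n) ^ 2 * ‖d n‖ ^ 2 := by
      rw [norm_neg, norm_smul, Real.norm_eq_abs, abs_of_pos hδn0]; ring
    rw [hFp, hnp] at ht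
    have hco := hcoercive (u n) (d n)
    have hs0 : (0:ℝ) ≤ ‖d n‖ ^ 2 := sq_nonneg _
    have key1 : 0 ≤ δ (u n) * (F' (u n) (d n) (d n) - αF' * ‖d n‖ ^ 2) :=
      mul_nonneg hδn0.le (by linarith)
    have key2 : 0 ≤ ‖d n‖ ^ 2 * ((δ (u n) - δmin) * (2 * αF' - L * δmax)) :=
      mul_nonneg hs0 (mul_nonneg (by linarith) (by linarith))
    have key3 : 0 ≤ ‖d n‖ ^ 2 * ((δmax - δ (u n)) * (L * δ (u n))) :=
      mul_nonneg hs0 (mul_nonneg (by linarith) (by positivity))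
    nlinarith
  -- H (u n) converges, so the directions tend to zero
  set a : ℕ → ℝ := fun n => H (u n) with ha
  have hanti : Antitone a := antitone_nat_of_succ_le fun n => by
    have := step n; have := mul_nonneg hc.le (sq_nonneg ‖d n‖); simp only [ha]; linarith
  have hbdd : BddBelow (Set.range a) := by
    refine ⟨H 0 - ‖F 0‖ ^ 2 / (2 * ν), ?_⟩
    rintro x ⟨n, rfl⟩
    exact lower (u n)
  have hconv := tendsto_atTop_ciInf hanti hbdd
  have h1 : Filter.Tendsto (fun n => a (n + 1)) Filter.atTop (nhds (⨅ n, a n)) :=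
    hconv.comp (Filter.tendsto_add_atTop_nat 1)
  have hdiff : Filter.Tendsto (fun n => a n - a (n + 1)) Filter.atTop (nhds 0) := by
    simpa using hconv.sub h1
  have hs2 : Filter.Tendsto (fun n => ‖d n‖ ^ 2) Filter.atTop (nhds 0) := by
    refine squeeze_zero (g := fun n => (a n - a (n + 1)) / c) (fun n => sq_nonneg _)
      (fun n => ?_) ?_
    · rw [le_div_iff₀ hc]
      have := step n
      simp only [ha]
      nlinarith
    · simpa using hdiff.div_const c
  have hdn : Filter.Tendsto (fun n => ‖d n‖) Filter.atTop (nhds 0) := by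
    have h := (Real.continuous_sqrt.tendsto 0).comp hs2
    simp only [Function.comp, Real.sqrt_zero] at h
    convert h using 2 with n
    exact (Real.sqrt_sq (norm_nonneg _)).symm
  have hFn : Filter.Tendsto (fun n => ‖F (u n)‖) Filter.atTop (nhds 0) := by
    refine squeeze_zero (fun n => norm_nonneg _) hFnorm ?_
    simpa using hdn.const_mul βF'
  -- Cauchy sequence
  have hkey : ∀ n m, ν * ‖u n - u m‖ ≤ ‖F (u n)‖ + ‖F (u m)‖ := by
    intro n m
    have h0 := hMono (u n) (u m)
    have h1 : F (u n) (u n - u m) ≤ ‖F (u n)‖ * ‖u n - u m‖ := by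
      have := (F (u n)).le_opNorm (u n - u m)
      rw [Real.norm_eq_abs] at this
      linarith [le_abs_self (F (u n) (u n - u m))]
    have h2 : -(F (u m) (u n - u m)) ≤ ‖F (u m)‖ * ‖u n - u m‖ := by
      have := (F (u m)).le_opNorm (u n - u m)
      rw [Real.norm_eq_abs] at this
      linarith [neg_abs_le (F (u m) (u n - u m))]
    rcases eq_or_lt_of_le (norm_nonneg (u n - u m)) with h | h
    · rw [← h, mul_zero]
      positivity
    · have hmul : ν * ‖u n - u m‖ * ‖u n - u m‖ ≤
          (‖F (u n)‖ + ‖F (u m)‖) * ‖u n - u m‖ := by nlinarith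
      exact le_of_mul_le_mul_right hmul h
  have hcauchy : CauchySeq u := by
    rw [Metric.cauchySeq_iff']
    intro ε hε
    have hev : ∀ᶠ n in Filter.atTop, ‖F (u n)‖ < ν * ε / 2 :=
      hFn.eventually (gt_mem_nhds (by positivity))
    obtain ⟨N, hN⟩ := Filter.eventually_atTop.1 hev
    refine ⟨N, fun n hn => ?_⟩
    rw [dist_eq_norm]
    have h3 : ν * ‖u n - u N‖ < ν * ε := by
      calc ν * ‖u n - u N‖ ≤ ‖F (u n)‖ + ‖F (u N)‖ := hkey n N
        _ < ν * ε / 2 + ν * ε / 2 := add_lt_add (hN n hn) (hN N le_rfl)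
        _ = ν * ε := by ring
    exact lt_of_mul_lt_mul_left h3 hν.le
  obtain ⟨ustar, hlimu⟩ := cauchySeq_tendsto_of_complete hcauchy
  have hnormu : Filter.Tendsto (fun n => ‖u n - ustar‖) Filter.atTop (nhds 0) := by
    rw [← tendsto_iff_norm_sub_tendsto_zero]
    exact hlimu
  have hzero : ∀ v : X, F ustar v = 0 := by
    intro v
    have t0 : Filter.Tendsto (fun n => F (u n) v) Filter.atTop (nhds 0) := by
      refine squeeze_zero_norm (a := fun n => ‖F (u n)‖ * ‖v‖) (fun n => ?_) ?_
      · exact (F (u n)).le_opNorm v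
      · simpa using hFn.mul_const ‖v‖
    have t1 : Filter.Tendsto (fun n => F (u n) v - F ustar v) Filter.atTop (nhds 0) := by
      refine squeeze_zero_norm (a := fun n => L * ‖u n - ustar‖ * ‖v‖) (fun n => ?_) ?_
      · rw [Real.norm_eq_abs]
        exact hLip (u n) ustar v
      · have := (hnormu.const_mul L).mul_const ‖v‖
        simpa using this
    have t2 : Filter.Tendsto (fun n => F (u n) v) Filter.atTop (nhds (F ustar v)) := by
      have := t1.add_const (F ustar v)
      simpa using this
    exact tendsto_nhds_unique t2 t0
  refine ⟨ustar, hzero, fun w hw => ?_, hlimu⟩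
  have hm := hMono w ustar
  rw [hw, hzero, sub_zero] at hm
  have hsq : ‖w - ustar‖ ^ 2 = 0 := by nlinarith [sq_nonneg ‖w - ustar‖]
  have h0 : ‖w - ustar‖ = 0 := by
    exact pow_eq_zero_iff two_ne_zero |>.1 hsq
  rw [← sub_eq_zero]
  exact norm_eq_zero.1 h0
end

section
/- Let X be a real Hilbert space, F : X → X* Lipschitz continuous with constant L > 0 and Gateaux differentiable with ⟨F'(u)v, v⟩ ≥ α_{F'}‖v‖_X² for all u, v ∈ X, and let H : X → ℝ be Gateaux differentiable with H' = F. If u ∈ X, δ > 0, and u⁺ = u − δ F'(u)^{-1} F(u), then H(u) − H(u⁺) ≥ (α_{F'}/δ − L/2) ‖u − u⁺‖_X². -/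
/-- Shift a derivative-at-zero statement to a derivative at `t`. -/
lemma hasDerivAt_shift (ψ : ℝ → ℝ) (c t : ℝ)
    (h : HasDerivAt (fun s => ψ (t + s)) c 0) : HasDerivAt ψ c t := by
  have h2 : HasDerivAt (fun s => ψ (t + s)) c (-t + t) := by simpa using h
  have h3 := h2.comp_const_add (-t) t
  have he : (fun x : ℝ => ψ (t + (-t + x))) = ψ := by
    funext x; ring_nf
  rwa [he] at h3

/-- One-step energy decay of the damped Newton method:
`H(u) − H(u⁺) ≥ (α_{F'}/δ − L/2)‖u − u⁺‖²` for `u⁺ = u − δ F'(u)⁻¹ F(u)`. -/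
theorem dampedNewton_energy_decay
    {X : Type*} [NormedAddCommGroup X] [InnerProductSpace ℝ X] [CompleteSpace X]
    (F : X → StrongDual ℝ X) (F' : X → X ≃L[ℝ] StrongDual ℝ X)
    (H : X → ℝ) (L αF' : ℝ) (hL : 0 < L) (hαF' : 0 < αF')
    -- Lipschitz continuity
    (hLip : ∀ u v w : X, |F u w - F v w| ≤ L * ‖u - v‖ * ‖w‖)
    -- Gateaux differentiability and uniform coercivity of the derivative
    (hGateaux : ∀ u v : X, HasDerivAt (fun t : ℝ => F (u + t • v)) (F' u v) 0)
    (hcoercive : ∀ u v : X, αF' * ‖v‖ ^ 2 ≤ F' u v v)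
    -- H is a Gateaux differentiable potential of F
    (hH : ∀ u v : X, HasDerivAt (fun t : ℝ => H (u + t • v)) (F u v) 0)
    (u uplus : X) (δ : ℝ) (hδ : 0 < δ)
    (huplus : uplus = u - δ • (F' u).symm (F u)) :
    (αF' / δ - L / 2) * ‖u - uplus‖ ^ 2 ≤ H u - H uplus := by
  set v : X := (F' u).symm (F u) with hv
  set d : X := uplus - u with hd
  have hdv : d = -(δ • v) := by rw [hd, huplus]; abel
  have hnd : ‖d‖ = δ * ‖v‖ := by
    rw [hdv, norm_neg, norm_smul, Real.norm_eq_abs, abs_of_pos hδ]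
  -- derivative of t ↦ H (u + t • d) at every t
  have hg : ∀ t : ℝ, HasDerivAt (fun s : ℝ => H (u + s • d)) (F (u + t • d) d) t := by
    intro t
    apply hasDerivAt_shift
    have := hH (u + t • d) d
    convert this using 2 with s
    rw [add_smul]; abel
  -- auxiliary function
    -- φ t = H(u + t d) - (F u d) t - L ‖d‖² t² / 2
  set φ : ℝ → ℝ := fun t => H (u + t • d) - (F u d) * t - L * ‖d‖ ^ 2 * t ^ 2 / 2 with hφ
  have hφ' : ∀ t : ℝ, HasDerivAt φ
      (F (u + t • d) d - F u d - L * ‖d‖ ^ 2 * t) t := by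
    intro t
    have h1 := (hg t).sub ((hasDerivAt_id t).const_mul (F u d))
    have h2 := h1.sub (((hasDerivAt_pow 2 t).const_mul (L * ‖d‖ ^ 2)).div_const 2)
    exact h2.congr_deriv (by rw [show (2:ℕ) - 1 = 1 from rfl, pow_one, Nat.cast_ofNat]; ring)
  have hanti : AntitoneOn φ (Set.Icc (0:ℝ) 1) := by
    apply antitoneOn_of_deriv_nonpos (convex_Icc 0 1)
    · exact fun t _ => ((hφ' t).differentiableAt).continuousAt.continuousWithinAt
    · exact fun t _ => ((hφ' t).differentiableAt).differentiableWithinAt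
    · intro t ht
      rw [interior_Icc] at ht
      rw [(hφ' t).deriv]
      have hb := hLip (u + t • d) u d
      have habs : F (u + t • d) d - F u d ≤ L * ‖u + t • d - u‖ * ‖d‖ :=
        (abs_le.mp hb).2
      have hnorm : ‖u + t • d - u‖ = t * ‖d‖ := by
        have : u + t • d - u = t • d := by abel
        rw [this, norm_smul, Real.norm_eq_abs, abs_of_pos ht.1]
      rw [hnorm] at habs
      nlinarith [habs]
  have hkey : φ 1 ≤ φ 0 := hanti (by norm_num) (by norm_num) zero_le_one
  have h0 : u + (0:ℝ) • d = u := by simp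
  have h1 : u + (1:ℝ) • d = uplus := by simp [hd]
  rw [hφ] at hkey
  simp only [h0, h1, mul_one, mul_zero, one_pow] at hkey
  -- hkey : H uplus - F u d - L * ‖d‖^2 / 2 ≤ H u
  -- bound F u d using coercivity
  have hFv : (F' u) v = F u := (F' u).apply_symm_apply (F u)
  have hFud : F u d = -δ * (F u v) := by
    rw [hdv]
    simp [smul_smul]
  have hcoe : αF' * ‖v‖ ^ 2 ≤ F u v := by
    have := hcoercive u v
    rwa [hFv] at this
  have hnd2 : ‖d‖ ^ 2 = δ ^ 2 * ‖v‖ ^ 2 := by rw [hnd]; ring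
  have hFud_le : F u d ≤ -(αF' / δ) * ‖d‖ ^ 2 := by
    rw [hFud, hnd2]
    have h3 : -δ * F u v ≤ -δ * (αF' * ‖v‖ ^ 2) := by
      apply mul_le_mul_of_nonpos_left hcoe (by linarith)
    calc -δ * F u v ≤ -δ * (αF' * ‖v‖ ^ 2) := h3
      _ = -(αF' / δ) * (δ ^ 2 * ‖v‖ ^ 2) := by field_simp
  have hnuu : ‖u - uplus‖ = ‖d‖ := by rw [hd, ← norm_neg]; congr 1; abel
  rw [hnuu]
  have hδ' : αF' / δ > 0 := div_pos hαF' hδ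
  nlinarith [hkey, hFud_le]
end

section
/- Let X be a real Hilbert space and F : X → X* satisfy (F1)–(F5). Let 0 < δ_min ≤ δ_max < ∞ and C_H > 0 be constants. Suppose {u^n} ⊂ X is a sequence of damped Newton iterates u^{n+1} = u^n − δ(u^n) F'(u^n)^{-1} F(u^n) whose damping strategy satisfies δ(u^n) ∈ [δ_min, δ_max] for all n and the energy decay property H(u^n) − H(u^{n+1}) ≥ C_H ‖u^n − u^{n+1}‖_X² for all n ∈ ℕ. Then u^n → u* strongly in X as n → ∞, where u* ∈ X is the unique solution of F(u) = 0. -/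
/-- shift a derivative-at-zero statement -/
lemma shift_hasDerivAt {f : ℝ → ℝ} {c s : ℝ}
    (h : HasDerivAt (fun t => f (s + t)) c 0) : HasDerivAt f c s := by
  have hf : HasDerivAt (fun t : ℝ => t - s) 1 s := (hasDerivAt_id s).sub_const s
  have h2 := HasDerivAt.comp (x := s) (by simpa using h) hf
  have heq : ((fun t => f (s + t)) ∘ fun t : ℝ => t - s) = f := by
    funext t; simp [Function.comp]
  rw [heq] at h2
  simpa using h2

/-- Generalised convergence theorem: under (F1)–(F5), any damped
Newton sequence with step sizes in `[δ_min, δ_max]` satisfying the energy decay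
`H(uⁿ) − H(uⁿ⁺¹) ≥ C_H ‖uⁿ − uⁿ⁺¹‖²` converges strongly to the unique solution. -/
theorem generalised_dampedNewton_converges
    {X : Type*} [NormedAddCommGroup X] [InnerProductSpace ℝ X] [CompleteSpace X]
    (F : X → StrongDual ℝ X) (F' : X → X ≃L[ℝ] StrongDual ℝ X)
    (G H : X → ℝ) (L ν αF' βF' : ℝ)
    (hL : 0 < L) (hν : 0 < ν) (hαF' : 0 < αF') (hβF' : 0 < βF')
    -- (F1) Lipschitz continuity
    (hLip : ∀ u v w : X, |F u w - F v w| ≤ L * ‖u - v‖ * ‖w‖)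
    -- (F2) strong monotonicity
    (hMono : ∀ u v : X, ν * ‖u - v‖ ^ 2 ≤ F u (u - v) - F v (u - v))
    -- (F3) Gateaux differentiability with uniformly coercive and bounded derivative
    (hGateaux : ∀ u v : X, HasDerivAt (fun t : ℝ => F (u + t • v)) (F' u v) 0)
    (hcoercive : ∀ u v : X, αF' * ‖v‖ ^ 2 ≤ F' u v v)
    (hbounded : ∀ u v w : X, F' u v w ≤ βF' * ‖v‖ * ‖w‖)
    -- (F4) G'(u) = F'(u)u, with G' weakly continuous
    (hG : ∀ u v : X, HasDerivAt (fun t : ℝ => G (u + t • v)) (F' u u v) 0)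
    (hGweak : ∀ v : X, Continuous fun u : X => F' u u v)
    -- (F5) F is a potential operator with potential H
    (hH : ∀ u v : X, HasDerivAt (fun t : ℝ => H (u + t • v)) (F u v) 0)
    -- damping strategy and constants
    (δ : X → ℝ) (δmin δmax CH : ℝ)
    (hδmin : 0 < δmin) (hδminmax : δmin ≤ δmax) (hCH : 0 < CH)
    -- damped Newton iterates
    (u : ℕ → X)
    (hiter : ∀ n : ℕ, u (n + 1) = u n - δ (u n) • (F' (u n)).symm (F (u n)))
    (hδrange : ∀ n : ℕ, δ (u n) ∈ Set.Icc δmin δmax)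
    -- energy decay property
    (hdecay : ∀ n : ℕ, CH * ‖u n - u (n + 1)‖ ^ 2 ≤ H (u n) - H (u (n + 1))) :
    ∃ ustar : X, (∀ v : X, F ustar v = 0) ∧
      (∀ w : X, (∀ v : X, F w v = 0) → w = ustar) ∧
      Filter.Tendsto u Filter.atTop (nhds ustar) := by
  -- derivative of t ↦ H (a + t • w) at any s
  have hφ : ∀ (a w : X) (s : ℝ),
      HasDerivAt (fun t : ℝ => H (a + t • w)) (F (a + s • w) w) s := by
    intro a w s
    apply shift_hasDerivAt
    have h0 := hH (a + s • w) w
    have heq : (fun t : ℝ => H (a + s • w + t • w))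
        = (fun t : ℝ => H (a + (s + t) • w)) := by
      funext t; congr 1; rw [add_smul]; abel
    rw [heq] at h0
    exact h0
  -- strong convexity lower bound for H
  have Hlb : ∀ a v : X, H a + F a (v - a) + ν / 2 * ‖v - a‖ ^ 2 ≤ H v := by
    intro a v
    set w := v - a with hw
    set ψ : ℝ → ℝ := fun t => H (a + t • w) - F a w * t - ν * ‖w‖ ^ 2 / 2 * t ^ 2 with hψdef
    have hψ : ∀ s : ℝ, HasDerivAt ψ
        (F (a + s • w) w - F a w - ν * ‖w‖ ^ 2 * s) s := by
      intro s
      have h1 := (hφ a w s).sub ((hasDerivAt_id s).const_mul (F a w))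
      have h2 := h1.sub (((hasDerivAt_pow 2 s)).const_mul (ν * ‖w‖ ^ 2 / 2))
      exact h2.congr_deriv (by push_cast; ring)
    have hψnonneg : ∀ s : ℝ, 0 ≤ s →
        0 ≤ F (a + s • w) w - F a w - ν * ‖w‖ ^ 2 * s := by
      intro s hs
      rcases eq_or_lt_of_le hs with rfl | hs'
      · simp
      · have h := hMono (a + s • w) a
        have he : a + s • w - a = s • w := by abel
        rw [he] at h
        have h2 : F (a + s • w) (s • w) = s * F (a + s • w) w := by
          simp [map_smul]
        have h3 : F a (s • w) = s * F a w := by simp [map_smul]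
        rw [h2, h3] at h
        have hn : ‖s • w‖ ^ 2 = s ^ 2 * ‖w‖ ^ 2 := by
          rw [norm_smul]; simp [abs_of_pos hs', mul_pow]
        rw [hn] at h
        nlinarith
    have hmono : MonotoneOn ψ (Set.Icc (0:ℝ) 1) := by
      apply monotoneOn_of_deriv_nonneg (convex_Icc 0 1)
      · exact fun x _ => ((hψ x).differentiableAt.continuousAt).continuousWithinAt
      · exact fun x _ => ((hψ x).differentiableAt).differentiableWithinAt
      · intro x hx
        rw [interior_Icc] at hx
        rw [(hψ x).deriv]
        exact hψnonneg x hx.1.le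
    have h01 := hmono (Set.left_mem_Icc.2 zero_le_one) (Set.right_mem_Icc.2 zero_le_one)
      zero_le_one
    have hv : a + (1:ℝ) • w = v := by simp [hw]
    simp only [hψdef, zero_smul, add_zero, mul_zero, mul_one, one_pow, hv] at h01
    have : H a - 0 - 0 ≤ H v - F a w * 1 - ν * ‖w‖ ^ 2 / 2 * 1 ^ 2 := by
      simpa using h01
    nlinarith
  -- bound on functional values of F (u n)
  set d : ℕ → ℝ := fun n => ‖u n - u (n + 1)‖ with hd
  set K : ℕ → ℝ := fun n => δmin⁻¹ * βF' * d n with hK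
  have hFabs : ∀ (a b w : X), |F' a b w| ≤ βF' * ‖b‖ * ‖w‖ := by
    intro a b w
    rw [abs_le]
    constructor
    · have := hbounded a b (-w)
      simp only [map_neg, norm_neg] at this
      linarith
    · exact hbounded a b w
  have hFn : ∀ n (v : X), |F (u n) v| ≤ K n * ‖v‖ := by
    intro n v
    have hδn := hδrange n
    have hδpos : 0 < δ (u n) := lt_of_lt_of_le hδmin hδn.1
    have hS : (F' (u n)).symm (F (u n)) = (δ (u n))⁻¹ • (u n - u (n + 1)) := by
      rw [hiter n]
      rw [show u n - (u n - δ (u n) • (F' (u n)).symm (F (u n)))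
          = δ (u n) • (F' (u n)).symm (F (u n)) by abel]
      rw [smul_smul, inv_mul_cancel₀ hδpos.ne', one_smul]
    have hFeq : F (u n) = F' (u n) ((δ (u n))⁻¹ • (u n - u (n + 1))) := by
      rw [← hS]; exact ((F' (u n)).apply_symm_apply (F (u n))).symm
    rw [hFeq]
    have : F' (u n) ((δ (u n))⁻¹ • (u n - u (n + 1))) v
        = (δ (u n))⁻¹ * F' (u n) (u n - u (n + 1)) v := by
      simp [map_smul]
    rw [this, abs_mul, abs_of_pos (inv_pos.2 hδpos)]
    calc (δ (u n))⁻¹ * |F' (u n) (u n - u (n + 1)) v|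
        ≤ δmin⁻¹ * (βF' * d n * ‖v‖) := by
          apply mul_le_mul (inv_anti₀ hδmin hδn.1)
            (hFabs _ _ _) (abs_nonneg _) (inv_nonneg.2 hδmin.le)
      _ = K n * ‖v‖ := by rw [hK]; ring
  -- d n → 0
  have hHanti : ∀ n, H (u (n + 1)) ≤ H (u n) := by
    intro n
    have := hdecay n
    nlinarith [sq_nonneg (d n), norm_nonneg (u n - u (n+1))]
  have hHantitone : Antitone (fun n => H (u n)) :=
    antitone_nat_of_succ_le hHanti
  have hHbdd : BddBelow (Set.range fun n => H (u n)) := by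
    refine ⟨H (u 0) - ‖F (u 0)‖ ^ 2 / (2 * ν), ?_⟩
    rintro x ⟨n, rfl⟩
    have h := Hlb (u 0) (u n)
    have habs : |F (u 0) (u n - u 0)| ≤ ‖F (u 0)‖ * ‖u n - u 0‖ := by
      simpa using (F (u 0)).le_opNorm (u n - u 0)
    have hFbd : -(‖F (u 0)‖ * ‖u n - u 0‖) ≤ F (u 0) (u n - u 0) := by
      linarith [neg_abs_le (F (u 0) (u n - u 0))]
    have key : ‖F (u 0)‖ * ‖u n - u 0‖ - ν / 2 * ‖u n - u 0‖ ^ 2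
        ≤ ‖F (u 0)‖ ^ 2 / (2 * ν) := by
      rw [le_div_iff₀ (by positivity : (0:ℝ) < 2 * ν)]
      nlinarith [sq_nonneg (ν * ‖u n - u 0‖ - ‖F (u 0)‖)]
    linarith
  have hHlim : Filter.Tendsto (fun n => H (u n)) Filter.atTop
      (nhds (⨅ n, H (u n))) :=
    tendsto_atTop_ciInf hHantitone hHbdd
  have hdiff0 : Filter.Tendsto (fun n => H (u n) - H (u (n + 1))) Filter.atTop (nhds 0) := by
    have h2 : Filter.Tendsto (fun n => H (u (n + 1))) Filter.atTop
        (nhds (⨅ n, H (u n))) :=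
      hHlim.comp (Filter.tendsto_add_atTop_nat 1)
    simpa using hHlim.sub h2
  have hdsq0 : Filter.Tendsto (fun n => d n ^ 2) Filter.atTop (nhds 0) := by
    have hsq : Filter.Tendsto (fun n => CH * d n ^ 2) Filter.atTop (nhds 0) := by
      apply squeeze_zero (fun n => by positivity) (fun n => hdecay n) hdiff0
    have := hsq.const_mul CH⁻¹
    simp only [← mul_assoc, inv_mul_cancel₀ hCH.ne', one_mul, mul_zero] at this
    exact this
  have hd0 : Filter.Tendsto d Filter.atTop (nhds 0) := by
    have : Filter.Tendsto (fun n => Real.sqrt (d n ^ 2)) Filter.atTop (nhds (Real.sqrt 0)) :=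
      (Real.continuous_sqrt.tendsto 0).comp hdsq0
    simpa [Real.sqrt_sq (norm_nonneg _), Real.sqrt_zero, hd] using this
  have hK0 : Filter.Tendsto K Filter.atTop (nhds 0) := by
    have := hd0.const_mul (δmin⁻¹ * βF')
    simpa [hK, mul_assoc] using this
  -- Cauchy
  have hdist : ∀ n m, ‖u n - u m‖ ≤ (K n + K m) / ν := by
    intro n m
    have hKn : 0 ≤ K n := mul_nonneg (by positivity) (norm_nonneg _)
    have hKm : 0 ≤ K m := mul_nonneg (by positivity) (norm_nonneg _)
    rcases eq_or_ne (u n) (u m) with he | he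
    · rw [he]; simp; positivity
    · have h := hMono (u n) (u m)
      have h1 : F (u n) (u n - u m) ≤ K n * ‖u n - u m‖ :=
        (le_abs_self _).trans (hFn n _)
      have h2 : -(K m * ‖u n - u m‖) ≤ F (u m) (u n - u m) := by
        have := (hFn m (u n - u m))
        linarith [neg_abs_le (F (u m) (u n - u m))]
      have hpos : 0 < ‖u n - u m‖ := by
        rw [norm_pos_iff, sub_ne_zero]; exact he
      have hle : ν * ‖u n - u m‖ ≤ K n + K m := by
        have := h.trans (by linarith : F (u n) (u n - u m) - F (u m) (u n - u m)
          ≤ (K n + K m) * ‖u n - u m‖)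
        nlinarith
      rw [div_eq_inv_mul, le_inv_mul_iff₀ hν]
      linarith
  have hcauchy : CauchySeq u := by
    rw [Metric.cauchySeq_iff]
    intro ε hε
    have hε4 : 0 < ν * ε / 4 := by positivity
    obtain ⟨N, hN⟩ := (Metric.tendsto_atTop.1 hK0) (ν * ε / 4) hε4
    refine ⟨N, fun m hm n hn => ?_⟩
    have hKm := hN m hm
    have hKn := hN n hn
    rw [Real.dist_eq, sub_zero] at hKm hKn
    have hKmle : K m < ν * ε / 4 := lt_of_abs_lt hKm
    have hKnle : K n < ν * ε / 4 := lt_of_abs_lt hKn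
    have := hdist m n
    rw [dist_eq_norm]
    calc ‖u m - u n‖ ≤ (K m + K n) / ν := this
      _ < ε := by rw [div_lt_iff₀ hν]; nlinarith
  obtain ⟨ustar, hlim⟩ := cauchySeq_tendsto_of_complete hcauchy
  have hnorm0 : Filter.Tendsto (fun n => ‖ustar - u n‖) Filter.atTop (nhds 0) := by
    have h2 : Filter.Tendsto (fun n => u n - ustar) Filter.atTop (nhds 0) := by
      simpa using hlim.sub (tendsto_const_nhds :
        Filter.Tendsto (fun _ : ℕ => ustar) Filter.atTop (nhds ustar))
    have := h2.norm
    simp only [norm_zero] at this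
    simpa [norm_sub_rev] using this
  have hzero : ∀ v : X, F ustar v = 0 := by
    intro v
    have hb : ∀ n, |F ustar v| ≤ L * ‖ustar - u n‖ * ‖v‖ + K n * ‖v‖ := by
      intro n
      calc |F ustar v| ≤ |F ustar v - F (u n) v| + |F (u n) v| := by
            have := abs_sub_abs_le_abs_sub (F ustar v) (F (u n) v)
            linarith
        _ ≤ L * ‖ustar - u n‖ * ‖v‖ + K n * ‖v‖ :=
            add_le_add (hLip ustar (u n) v) (hFn n v)
    have hrhs : Filter.Tendsto (fun n => L * ‖ustar - u n‖ * ‖v‖ + K n * ‖v‖)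
        Filter.atTop (nhds 0) := by
      have h1 : Filter.Tendsto (fun n => L * ‖ustar - u n‖ * ‖v‖) Filter.atTop (nhds 0) := by
        have := (hnorm0.const_mul L).mul_const ‖v‖
        simpa using this
      have h2 : Filter.Tendsto (fun n => K n * ‖v‖) Filter.atTop (nhds 0) := by
        have := hK0.mul_const ‖v‖
        simpa using this
      simpa using h1.add h2
    have : |F ustar v| ≤ 0 :=
      le_of_tendsto_of_tendsto' tendsto_const_nhds hrhs hb
    exact abs_eq_zero.1 (le_antisymm this (abs_nonneg _))
  refine ⟨ustar, hzero, ?_, hlim⟩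
  intro w hw
  have h := hMono w ustar
  rw [hw, hzero] at h
  have hx : ‖w - ustar‖ ^ 2 ≤ 0 := by
    have h' : ν * ‖w - ustar‖ ^ 2 ≤ ν * 0 := by rw [mul_zero]; linarith
    exact (mul_le_mul_iff_right₀ hν).1 h'
  have h0 : ‖w - ustar‖ = 0 :=
    pow_eq_zero_iff (n := 2) (by norm_num) |>.1 (le_antisymm hx (sq_nonneg _))
  rw [norm_eq_zero, sub_eq_zero] at h0
  exact h0
end

section
/- Let X be a real Hilbert space, F : X → X* Lipschitz continuous with constant L > 0 and Gateaux differentiable with ⟨F'(u)v, v⟩ ≥ α_{F'}‖v‖_X² for a constant α_{F'} > 0 independent of u, where α_{F'}/L ≤ 1, and let H : X → ℝ be Gateaux differentiable with H' = F. Fix θ ∈ (0, 1/2]. Then for every u ∈ X, the acceptance criterion of the adaptive damped Newton method holds with step-size δ = α_{F'}/L: setting u⁺ = u − δ F'(u)^{-1} F(u), one has H(u) − H(u⁺) ≥ (L/2)‖u − u⁺‖_X² ≥ θ min{α_{F'}, L} ‖u − u⁺‖_X². In particular, the repeat-loop of the adaptive algorithm (which successively shrinks δ from 1 by a factor σ ∈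 (0,1), capped below by α_{F'}/L) terminates after finitely many reductions. -/
/-- The acceptance criterion of the adaptive damped Newton method
holds for the step size `δ = α_{F'}/L`:
`H(u) − H(u⁺) ≥ (L/2)‖u − u⁺‖² ≥ θ min{α_{F'}, L}‖u − u⁺‖²`; in particular the
repeat-loop (shrinking `δ` from 1 by factors `σ`, capped below by `α_{F'}/L`)
terminates after finitely many reductions. -/
theorem adaptive_dampedNewton_loop_terminates
    {X : Type*} [NormedAddCommGroup X] [InnerProductSpace ℝ X] [CompleteSpace X]
    (F : X → StrongDual ℝ X) (F' : X → X ≃L[ℝ] StrongDual ℝ X)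
    (H : X → ℝ) (L αF' : ℝ) (hL : 0 < L) (hαF' : 0 < αF') (hαL : αF' / L ≤ 1)
    -- Lipschitz continuity
    (hLip : ∀ u v w : X, |F u w - F v w| ≤ L * ‖u - v‖ * ‖w‖)
    -- Gateaux differentiability and uniform coercivity of the derivative
    (hGateaux : ∀ u v : X, HasDerivAt (fun t : ℝ => F (u + t • v)) (F' u v) 0)
    (hcoercive : ∀ u v : X, αF' * ‖v‖ ^ 2 ≤ F' u v v)
    -- H is a Gateaux differentiable potential of F
    (hH : ∀ u v : X, HasDerivAt (fun t : ℝ => H (u + t • v)) (F u v) 0)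
    (θ σ : ℝ) (hθ : θ ∈ Set.Ioc (0:ℝ) (1/2)) (hσ : σ ∈ Set.Ioo (0:ℝ) 1) :
    ∀ u : X,
      (L / 2) * ‖u - (u - (αF' / L) • (F' u).symm (F u))‖ ^ 2 ≤
        H u - H (u - (αF' / L) • (F' u).symm (F u)) ∧
      θ * min αF' L * ‖u - (u - (αF' / L) • (F' u).symm (F u))‖ ^ 2 ≤
        (L / 2) * ‖u - (u - (αF' / L) • (F' u).symm (F u))‖ ^ 2 ∧
      ∃ k : ℕ,
        θ * min αF' L * ‖u - (u - max (σ ^ k) (αF' / L) • (F' u).symm (F u))‖ ^ 2 ≤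
          H u - H (u - max (σ ^ k) (αF' / L) • (F' u).symm (F u)) := by
  intro u
  set ρ : X := (F' u).symm (F u) with hρ
  set δ : ℝ := αF' / L with hδ
  have hδpos : 0 < δ := div_pos hαF' hL
  have hLδ : αF' = L * δ := by rw [hδ]; field_simp
  set w : X := -ρ with hw
  -- derivative of g at every point
  have hg : ∀ t : ℝ, HasDerivAt (fun s : ℝ => H (u + s • w)) (F (u + t • w) w) t := by
    intro t
    have h0 := hH (u + t • w) w
    have h0' : HasDerivAt (fun s : ℝ => H (u + t • w + s • w)) (F (u + t • w) w) (t - t) := by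
      rw [sub_self]; exact h0
    have h1 : HasDerivAt ((fun s : ℝ => H (u + t • w + s • w)) ∘ (fun s : ℝ => s - t))
        (F (u + t • w) w * 1) t :=
      HasDerivAt.comp (h := fun s : ℝ => s - t) t h0' ((hasDerivAt_id t).sub_const t)
    have heq : ((fun s : ℝ => H (u + t • w + s • w)) ∘ (fun s : ℝ => s - t))
        = fun s : ℝ => H (u + s • w) := by
      funext s; simp only [Function.comp]; congr 1; module
    rw [heq, mul_one] at h1
    exact h1
  have hnormw : ‖w‖ = ‖ρ‖ := norm_neg ρ
  -- F u ρ ≥ αF' ‖ρ‖²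
  have hFuρ : αF' * ‖ρ‖ ^ 2 ≤ F u ρ := by
    have h1 := hcoercive u ρ
    have h2 : F' u ρ = F u := (F' u).apply_symm_apply (F u)
    rwa [h2] at h1
  set φ : ℝ → ℝ := fun t => H (u + t • w) + (αF' * t - L * t ^ 2 / 2) * ‖ρ‖ ^ 2 with hφdef
  have hφ : ∀ t : ℝ, HasDerivAt φ (F (u + t • w) w + (αF' - L * t) * ‖ρ‖ ^ 2) t := by
    intro t
    have h1 : HasDerivAt (fun s : ℝ => αF' * s - L * s ^ 2 / 2) (αF' - L * t) t := by
      have := ((hasDerivAt_id t).const_mul αF').sub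
        (((hasDerivAt_pow 2 t).const_mul L).div_const 2)
      refine this.congr_deriv ?_
      push_cast; ring
    exact (hg t).add (h1.mul_const _)
  have hdiff : Differentiable ℝ φ := fun t => (hφ t).differentiableAt
  have hanti : AntitoneOn φ (Set.Icc 0 δ) := by
    apply antitoneOn_of_deriv_nonpos (convex_Icc 0 δ) hdiff.continuous.continuousOn
      hdiff.differentiableOn
    intro t ht
    rw [interior_Icc] at ht
    rw [(hφ t).deriv]
    have ht0 : 0 < t := ht.1
    have hlip := hLip (u + t • w) u ρ
    have hxu : ‖u + t • w - u‖ = t * ‖ρ‖ := by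
      rw [add_sub_cancel_left, norm_smul, hnormw, Real.norm_eq_abs, abs_of_pos ht0]
    rw [hxu] at hlip
    have habs := abs_le.mp hlip
    have hFw : F (u + t • w) w = -(F (u + t • w) ρ) := by
      rw [hw]; exact map_neg _ ρ
    rw [hFw]
    nlinarith [habs.1, hFuρ, sq_nonneg ‖ρ‖]
  have hkey : φ δ ≤ φ 0 := hanti (Set.left_mem_Icc.mpr hδpos.le)
    (Set.right_mem_Icc.mpr hδpos.le) hδpos.le
  have hφ0 : φ 0 = H u := by simp [hφdef]
  have hcoef : αF' * δ - L * δ ^ 2 / 2 = L / 2 * δ ^ 2 := by rw [hLδ]; ring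
  have huplus : u - δ • ρ = u + δ • w := by rw [hw]; module
  have hnorm : ‖u - (u - δ • ρ)‖ ^ 2 = δ ^ 2 * ‖ρ‖ ^ 2 := by
    rw [sub_sub_cancel, norm_smul, Real.norm_eq_abs, abs_of_pos hδpos, mul_pow]
  have main : L / 2 * ‖u - (u - δ • ρ)‖ ^ 2 ≤ H u - H (u - δ • ρ) := by
    rw [hnorm, huplus]
    have := hkey
    rw [hφ0, hφdef] at this
    simp only at this
    nlinarith [this, hcoef]
  have hminL : min αF' L ≤ L := min_le_right _ _
  have hminpos : 0 < min αF' L := lt_min hαF' hL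
  have second : θ * min αF' L * ‖u - (u - δ • ρ)‖ ^ 2 ≤ L / 2 * ‖u - (u - δ • ρ)‖ ^ 2 := by
    have hn : (0:ℝ) ≤ ‖u - (u - δ • ρ)‖ ^ 2 := sq_nonneg _
    have h1 : θ * min αF' L ≤ (1/2) * L := mul_le_mul hθ.2 hminL hminpos.le (by norm_num)
    have h2 := mul_le_mul_of_nonneg_right h1 hn
    linarith
  refine ⟨main, second, ?_⟩
  obtain ⟨k, hk⟩ := exists_pow_lt_of_lt_one hδpos hσ.2
  refine ⟨k, ?_⟩
  rw [max_eq_right hk.le]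
  exact le_trans second main
end

section
/- Let d ≥ 1 and let μ : [0,∞) → [0,∞) satisfy the condition (M2): there exist constants 0 < m_μ < M_μ < ∞ with m_μ(t − s) ≤ μ(t²)t − μ(s²)s ≤ M_μ(t − s) for all t ≥ s ≥ 0. Define a : ℝ^d → ℝ^d by a(x) = μ(|x|²)x. Then for all x, y ∈ ℝ^d: (a(x) − a(y)) · (x − y) ≥ m_μ |x − y|² and |a(x) − a(y)| ≤ 3 M_μ |x − y|. -/
open scoped RealInnerProductSpace

set_option maxHeartbeats 1000000 in
lemma aux_diffusion {d : ℕ} (μ : ℝ → ℝ) (hμnonneg : ∀ t : ℝ, 0 ≤ t → 0 ≤ μ t)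
    (mμ Mμ : ℝ) (hm : 0 < mμ) (hM : 0 < Mμ)
    (hM2 : ∀ s t : ℝ, 0 ≤ s → s ≤ t →
      mμ * (t - s) ≤ μ (t ^ 2) * t - μ (s ^ 2) * s ∧
      μ (t ^ 2) * t - μ (s ^ 2) * s ≤ Mμ * (t - s))
    (x y : EuclideanSpace ℝ (Fin d)) (hxy : ‖y‖ ≤ ‖x‖) :
    mμ * ‖x - y‖ ^ 2 ≤ ⟪μ (‖x‖ ^ 2) • x - μ (‖y‖ ^ 2) • y, x - y⟫ ∧
      ‖μ (‖x‖ ^ 2) • x - μ (‖y‖ ^ 2) • y‖ ≤ 3 * Mμ * ‖x - y‖ := by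
  set r := ‖x‖ with hr
  set s := ‖y‖ with hs
  have hr0 : (0:ℝ) ≤ r := norm_nonneg _
  have hs0 : (0:ℝ) ≤ s := norm_nonneg _
  have hrbd := hM2 0 r le_rfl hr0
  have hsbd := hM2 0 s le_rfl hs0
  simp only [ne_eq, zero_pow, mul_zero, sub_zero] at hrbd hsbd
  have hphi := hM2 s r hs0 hxy
  have hc : (⟪x, y⟫ : ℝ) ≤ r * s := real_inner_le_norm x y
  have hc' : -(r * s) ≤ (⟪x, y⟫ : ℝ) := neg_le_of_abs_le (abs_real_inner_le_norm x y)
  have hinner : (⟪μ (r ^ 2) • x - μ (s ^ 2) • y, x - y⟫ : ℝ)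
      = μ (r ^ 2) * r ^ 2 - (μ (r ^ 2) + μ (s ^ 2)) * ⟪x, y⟫ + μ (s ^ 2) * s ^ 2 := by
    simp only [inner_sub_left, inner_sub_right, real_inner_smul_left,
      real_inner_self_eq_norm_sq, real_inner_comm y x]
    ring
  have hnorm2 : ‖x - y‖ ^ 2 = r ^ 2 - 2 * ⟪x, y⟫ + s ^ 2 := by
    rw [norm_sub_sq_real]
  have hrs : r - s ≤ ‖x - y‖ := norm_sub_norm_le x y
  constructor
  · -- monotonicity
    rw [hinner, hnorm2]
    rcases eq_or_lt_of_le hs0 with h0 | hspos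
    · -- s = 0
      have hy0 : y = 0 := by rwa [← h0, eq_comm, norm_eq_zero] at hs
      have hc0 : (⟪x, y⟫ : ℝ) = 0 := by simp [hy0]
      rw [hc0, ← h0]
      nlinarith [hphi.1, hsbd.1]
    · have hμs : mμ ≤ μ (s ^ 2) := by
        have := hsbd.1
        nlinarith
      have hμr : mμ ≤ μ (r ^ 2) := by
        have hrpos : 0 < r := lt_of_lt_of_le hspos hxy
        have := hrbd.1
        nlinarith
      nlinarith [hphi.1, mul_nonneg (sub_nonneg.2 hxy)
        (sub_nonneg.2 (le_refl (0:ℝ))), mul_nonneg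
        (add_nonneg (sub_nonneg.2 hμr) (sub_nonneg.2 hμs)) (sub_nonneg.2 hc)]
  · -- Lipschitz
    rcases eq_or_lt_of_le hr0 with h0 | hrpos
    · have hx0 : x = 0 := by rwa [← h0, eq_comm, norm_eq_zero] at hr
      have hy0 : y = 0 := by
        have : s = 0 := le_antisymm (h0 ▸ hxy) hs0
        rwa [norm_eq_zero] at this
      simp [hx0, hy0]
    have hμrM : μ (r ^ 2) ≤ Mμ := le_of_mul_le_mul_right hrbd.2 hrpos
    have hμr0 : 0 ≤ μ (r ^ 2) := hμnonneg _ (sq_nonneg r)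
    have hkey : μ (r ^ 2) • x - μ (s ^ 2) • y
        = μ (r ^ 2) • (x - y) + (μ (r ^ 2) - μ (s ^ 2)) • y := by
      module
    have hrs0 : (0:ℝ) ≤ r - s := sub_nonneg.2 hxy
    have hφs0 : 0 ≤ μ (s ^ 2) * s := mul_nonneg (hμnonneg _ (sq_nonneg s)) hs0
    have e1 : s * (μ (r ^ 2) * r - μ (s ^ 2) * s) ≤ s * (Mμ * (r - s)) :=
      mul_le_mul_of_nonneg_left hphi.2 hs0
    have e2 : s * (mμ * (r - s)) ≤ s * (μ (r ^ 2) * r - μ (s ^ 2) * s) :=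
      mul_le_mul_of_nonneg_left hphi.1 hs0
    have e3 : μ (s ^ 2) * s * (r - s) ≤ Mμ * s * (r - s) :=
      mul_le_mul_of_nonneg_right hsbd.2 hrs0
    have e4 : 0 ≤ μ (s ^ 2) * s * (r - s) := mul_nonneg hφs0 hrs0
    have e5 : Mμ * s * (r - s) ≤ Mμ * r * (r - s) := by
      nlinarith [mul_nonneg (mul_nonneg hM.le hrs0) hrs0]
    have e6 : 0 ≤ Mμ * r * (r - s) := mul_nonneg (mul_nonneg hM.le hr0) hrs0
    have e7 : 0 ≤ s * (mμ * (r - s)) := mul_nonneg hs0 (mul_nonneg hm.le hrs0)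
    have hid : r * ((μ (r ^ 2) - μ (s ^ 2)) * s)
        = s * (μ (r ^ 2) * r - μ (s ^ 2) * s) - μ (s ^ 2) * s * (r - s) := by ring
    have hu : r * ((μ (r ^ 2) - μ (s ^ 2)) * s) ≤ r * (2 * Mμ * (r - s)) := by
      rw [hid]; linarith [e1, e4, e5, e6]
    have hl : r * (-(2 * Mμ * (r - s))) ≤ r * ((μ (r ^ 2) - μ (s ^ 2)) * s) := by
      rw [hid]; linarith [e2, e3, e5, e6, e7]
    have hDbd : |(μ (r ^ 2) - μ (s ^ 2)) * s| ≤ 2 * Mμ * (r - s) := by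
      rw [abs_le]
      exact ⟨le_of_mul_le_mul_left hl hrpos, le_of_mul_le_mul_left hu hrpos⟩
    calc ‖μ (r ^ 2) • x - μ (s ^ 2) • y‖
        ≤ ‖μ (r ^ 2) • (x - y)‖ + ‖(μ (r ^ 2) - μ (s ^ 2)) • y‖ := by
          rw [hkey]; exact norm_add_le _ _
      _ = μ (r ^ 2) * ‖x - y‖ + |μ (r ^ 2) - μ (s ^ 2)| * s := by
          rw [norm_smul, norm_smul, Real.norm_eq_abs, Real.norm_eq_abs,
            abs_of_nonneg hμr0]
      _ ≤ Mμ * ‖x - y‖ + 2 * Mμ * (r - s) := by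
          have h1 : μ (r ^ 2) * ‖x - y‖ ≤ Mμ * ‖x - y‖ :=
            mul_le_mul_of_nonneg_right hμrM (norm_nonneg _)
          have h2 : |μ (r ^ 2) - μ (s ^ 2)| * s ≤ 2 * Mμ * (r - s) := by
            rwa [abs_mul, abs_of_nonneg hs0] at hDbd
          exact add_le_add h1 h2
      _ ≤ 3 * Mμ * ‖x - y‖ := by nlinarith

/-- Under (M2), the vector field `a(x) = μ(|x|²)x` on `ℝ^d` is
strongly monotone with constant `m_μ` and Lipschitz with constant `3M_μ`. -/
theorem diffusion_field_monotone_lipschitz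
    (d : ℕ) (hd : 1 ≤ d) (μ : ℝ → ℝ) (hμnonneg : ∀ t : ℝ, 0 ≤ t → 0 ≤ μ t)
    (mμ Mμ : ℝ) (hm : 0 < mμ) (hmM : mμ < Mμ)
    -- (M2)
    (hM2 : ∀ s t : ℝ, 0 ≤ s → s ≤ t →
      mμ * (t - s) ≤ μ (t ^ 2) * t - μ (s ^ 2) * s ∧
      μ (t ^ 2) * t - μ (s ^ 2) * s ≤ Mμ * (t - s))
    (a : EuclideanSpace ℝ (Fin d) → EuclideanSpace ℝ (Fin d))
    (ha : ∀ x : EuclideanSpace ℝ (Fin d), a x = μ (‖x‖ ^ 2) • x) :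
    ∀ x y : EuclideanSpace ℝ (Fin d),
      mμ * ‖x - y‖ ^ 2 ≤ inner ℝ (a x - a y) (x - y) ∧
      ‖a x - a y‖ ≤ 3 * Mμ * ‖x - y‖ := by
  have hM : 0 < Mμ := hm.trans hmM
  intro x y
  rw [ha x, ha y]
  rcases le_total ‖y‖ ‖x‖ with h | h
  · exact aux_diffusion μ hμnonneg mμ Mμ hm hM hM2 x y h
  · obtain ⟨h1, h2⟩ := aux_diffusion μ hμnonneg mμ Mμ hm hM hM2 y x h
    constructor
    · have e : (⟪μ (‖y‖ ^ 2) • y - μ (‖x‖ ^ 2) • x, y - x⟫ : ℝ)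
          = ⟪μ (‖x‖ ^ 2) • x - μ (‖y‖ ^ 2) • y, x - y⟫ := by
        rw [← inner_neg_neg, neg_sub, neg_sub]
      rw [norm_sub_rev y x, e] at h1
      exact h1
    · rw [norm_sub_rev y x, ← norm_neg, neg_sub] at h2
      exact h2
end

section
/- Let d ≥ 1 and let μ : [0,∞) → [0,∞) be continuously differentiable with μ'(t) ≤ 0 for all t ≥ 0 (condition (M1)), and satisfy (M2) with constants 0 < m_μ < M_μ < ∞, i.e., m_μ(t − s) ≤ μ(t²)t − μ(s²)s ≤ M_μ(t − s) for all t ≥ s ≥ 0. Then for all x, v, w ∈ ℝ^d: (i) μ(|x|²)|v|² + 2μ'(|x|²)(x·v)² ≥ m_μ |v|², and (ii) |μ(|x|²)(v·w) + 2μ'(|x|²)(x·v)(x·w)| ≤ (2M_μ − m_μ)|v||w|. -/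
open Set Filter Topology

lemma deriv_in_Icc (μ μ' : ℝ → ℝ)
    (hdiff : ∀ t ∈ Set.Ici (0:ℝ), HasDerivWithinAt μ (μ' t) (Set.Ici 0) t)
    (mμ Mμ : ℝ)
    (hM2 : ∀ s t : ℝ, 0 ≤ s → s ≤ t →
      mμ * (t - s) ≤ μ (t ^ 2) * t - μ (s ^ 2) * s ∧
      μ (t ^ 2) * t - μ (s ^ 2) * s ≤ Mμ * (t - s)) (t : ℝ) (ht : 0 ≤ t) :
    mμ ≤ μ (t ^ 2) + 2 * μ' (t ^ 2) * t ^ 2 ∧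
      μ (t ^ 2) + 2 * μ' (t ^ 2) * t ^ 2 ≤ Mμ := by
  set g : ℝ → ℝ := fun s => μ (s ^ 2) * s with hg_def
  have hsq : HasDerivWithinAt (fun s : ℝ => s ^ 2) (2 * t) (Set.Ici 0) t := by
    simpa using (hasDerivAt_pow 2 t).hasDerivWithinAt
  have hmaps : Set.MapsTo (fun s : ℝ => s ^ 2) (Set.Ici 0) (Set.Ici 0) :=
    fun y _ => sq_nonneg y
  have hcomp : HasDerivWithinAt (fun s : ℝ => μ (s ^ 2)) (μ' (t ^ 2) * (2 * t))
      (Set.Ici 0) t :=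
    HasDerivWithinAt.comp (h := fun s : ℝ => s ^ 2) (h₂ := μ) t
      (hdiff (t ^ 2) (sq_nonneg t)) hsq hmaps
  have hg : HasDerivWithinAt g (μ (t ^ 2) + 2 * μ' (t ^ 2) * t ^ 2) (Set.Ici 0) t := by
    have := hcomp.mul (hasDerivWithinAt_id t (Set.Ici 0))
    exact this.congr_deriv (by simp only [id]; ring)
  have hT := hasDerivWithinAt_iff_tendsto_slope.mp hg
  have hsub : Set.Ioi t ⊆ Set.Ici 0 \ {t} := fun y hy =>
    ⟨le_trans ht (le_of_lt hy), ne_of_gt hy⟩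
  haveI : (𝓝[Set.Ici 0 \ {t}] t).NeBot :=
    Filter.neBot_of_le (nhdsWithin_mono t hsub)
  have hslope : ∀ y ∈ Set.Ici (0:ℝ) \ {t}, slope g t y ∈ Set.Icc mμ Mμ := by
    intro y ⟨hy0, hyt⟩
    have hyt' : y ≠ t := hyt
    rcases lt_or_gt_of_ne hyt' with h | h
    · -- y < t
      obtain ⟨h1, h2⟩ := hM2 y t hy0 h.le
      have hpos : 0 < t - y := by linarith
      rw [slope_def_field]
      constructor
      · rw [le_div_iff_of_neg (by linarith : y - t < 0)]
        simp only [hg_def]; nlinarith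
      · rw [div_le_iff_of_neg (by linarith : y - t < 0)]
        simp only [hg_def]; nlinarith
    · obtain ⟨h1, h2⟩ := hM2 t y ht h.le
      have hpos : 0 < y - t := by linarith
      rw [slope_def_field]
      constructor
      · rw [le_div_iff₀ hpos]
        simp only [hg_def]; nlinarith
      · rw [div_le_iff₀ hpos]
        simp only [hg_def]; nlinarith
  have hev : ∀ᶠ y in 𝓝[Set.Ici 0 \ {t}] t, slope g t y ∈ Set.Icc mμ Mμ :=
    eventually_nhdsWithin_of_forall hslope
  constructor
  · exact ge_of_tendsto hT (hev.mono fun y hy => hy.1)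
  · exact le_of_tendsto hT (hev.mono fun y hy => hy.2)

/-- Under (M1) and (M2), the pointwise Jacobian bilinear form
`(v,w) ↦ μ(|x|²)(v·w) + 2μ'(|x|²)(x·v)(x·w)` of `x ↦ μ(|x|²)x` is coercive with
constant `m_μ` and bounded with constant `2M_μ − m_μ`. -/
theorem diffusion_jacobian_coercive_bounded
    (d : ℕ) (hd : 1 ≤ d) (μ μ' : ℝ → ℝ) (hμnonneg : ∀ t : ℝ, 0 ≤ t → 0 ≤ μ t)
    -- (M1): μ continuously differentiable on [0,∞) with μ' ≤ 0
    (hdiff : ∀ t ∈ Set.Ici (0:ℝ), HasDerivWithinAt μ (μ' t) (Set.Ici 0) t)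
    (hcont : ContinuousOn μ' (Set.Ici 0))
    (hdec : ∀ t : ℝ, 0 ≤ t → μ' t ≤ 0)
    (mμ Mμ : ℝ) (hm : 0 < mμ) (hmM : mμ < Mμ)
    -- (M2)
    (hM2 : ∀ s t : ℝ, 0 ≤ s → s ≤ t →
      mμ * (t - s) ≤ μ (t ^ 2) * t - μ (s ^ 2) * s ∧
      μ (t ^ 2) * t - μ (s ^ 2) * s ≤ Mμ * (t - s)) :
    ∀ x v w : EuclideanSpace ℝ (Fin d),
      mμ * ‖v‖ ^ 2 ≤
        μ (‖x‖ ^ 2) * ‖v‖ ^ 2 + 2 * μ' (‖x‖ ^ 2) * (inner ℝ x v : ℝ) ^ 2 ∧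
      |μ (‖x‖ ^ 2) * (inner ℝ v w : ℝ) +
          2 * μ' (‖x‖ ^ 2) * (inner ℝ x v : ℝ) * (inner ℝ x w : ℝ)| ≤
        (2 * Mμ - mμ) * ‖v‖ * ‖w‖ := by
  intro x v w
  set r : ℝ := ‖x‖ with hr_def
  have hr : 0 ≤ r := norm_nonneg x
  set a : ℝ := μ (r ^ 2) with ha_def
  set b : ℝ := μ' (r ^ 2) with hb_def
  have hb : b ≤ 0 := hdec _ (sq_nonneg r)
  have ha0 : 0 ≤ a := hμnonneg _ (sq_nonneg r)
  obtain ⟨hA, hA'⟩ := deriv_in_Icc μ μ' hdiff mμ Mμ hM2 r hr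
  -- hA : mμ ≤ a + 2*b*r^2
  have haM : a ≤ Mμ := by
    rcases eq_or_lt_of_le hr with h0 | h0
    · have : r ^ 2 = 0 := by rw [← h0]; ring
      nlinarith [hA']
    · have := (hM2 0 r le_rfl hr).2
      have h02 : (0:ℝ) ^ 2 = 0 := by norm_num
      rw [h02] at this
      nlinarith
  set ipv : ℝ := (inner ℝ x v : ℝ) with hipv
  set ipw : ℝ := (inner ℝ x w : ℝ) with hipw
  set ivw : ℝ := (inner ℝ v w : ℝ) with hivw
  have hCSv : |ipv| ≤ r * ‖v‖ := abs_real_inner_le_norm x v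
  have hCSw : |ipw| ≤ r * ‖w‖ := abs_real_inner_le_norm x w
  have hCSvw : |ivw| ≤ ‖v‖ * ‖w‖ := abs_real_inner_le_norm v w
  constructor
  · have h1 : ipv ^ 2 ≤ r ^ 2 * ‖v‖ ^ 2 := by
      nlinarith [sq_abs ipv, abs_nonneg ipv, mul_nonneg hr (norm_nonneg v)]
    nlinarith [mul_nonneg (neg_nonneg.mpr hb) (sub_nonneg.mpr h1),
      mul_le_mul_of_nonneg_right hA (sq_nonneg ‖v‖)]
  · have key : |a * ivw + 2 * b * ipv * ipw| ≤
        a * (‖v‖ * ‖w‖) + 2 * (-b) * (r * ‖v‖) * (r * ‖w‖) := by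
      calc |a * ivw + 2 * b * ipv * ipw|
          ≤ |a * ivw| + |2 * b * ipv * ipw| := abs_add_le _ _
        _ = a * |ivw| + 2 * (-b) * (|ipv| * |ipw|) := by
            rw [abs_mul, abs_of_nonneg ha0, abs_mul, abs_mul, abs_mul,
              abs_of_nonpos hb, abs_two]
            ring
        _ ≤ a * (‖v‖ * ‖w‖) + 2 * (-b) * ((r * ‖v‖) * (r * ‖w‖)) := by
            have h1 := mul_le_mul_of_nonneg_left hCSvw ha0
            have h2 := mul_le_mul hCSv hCSw (abs_nonneg _) (mul_nonneg hr (norm_nonneg v))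
            have h3 := mul_le_mul_of_nonneg_left h2 (by linarith : (0:ℝ) ≤ 2 * (-b))
            linarith
        _ = a * (‖v‖ * ‖w‖) + 2 * (-b) * (r * ‖v‖) * (r * ‖w‖) := by ring
    refine key.trans ?_
    have hnb : 0 ≤ -b := neg_nonneg.mpr hb
    have h2 : -(2 * b * r ^ 2) ≤ a - mμ := by linarith
    have hvw : 0 ≤ ‖v‖ * ‖w‖ := mul_nonneg (norm_nonneg v) (norm_nonneg w)
    nlinarith [mul_le_mul_of_nonneg_right h2 hvw, mul_le_mul_of_nonneg_right haM hvw]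
end

section
/- Let γ, ζ, k > 0 and define the Bercovier–Engelman regularised diffusion coefficient μ : [0,∞) → (0,∞) by μ(t) = γ/√(t + k^{-2}) + 2ζ. Then μ is continuously differentiable and monotonically decreasing (condition (M1)), and satisfies condition (M2) with constants m_μ = 2ζ and M_μ = 2ζ + kγ; that is, 2ζ(t − s) ≤ μ(t²)t − μ(s²)s ≤ (2ζ + kγ)(t − s) for all real t ≥ s ≥ 0. -/
/-- The Bercovier–Engelman regularised diffusion coefficient
`μ(t) = γ/√(t + k⁻²) + 2ζ` (with `γ, ζ, k > 0`) is continuously differentiable,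
monotonically decreasing and positive on `[0,∞)` (condition (M1)), and satisfies
(M2) with `m_μ = 2ζ` and `M_μ = 2ζ + kγ`. -/
theorem bercovier_engelman_diffusion_coefficient
    (γ ζ k : ℝ) (hγ : 0 < γ) (hζ : 0 < ζ) (hk : 0 < k)
    (μ : ℝ → ℝ) (hμ : ∀ t : ℝ, μ t = γ / Real.sqrt (t + (k ^ 2)⁻¹) + 2 * ζ) :
    ContDiffOn ℝ 1 μ (Set.Ici 0) ∧
    AntitoneOn μ (Set.Ici 0) ∧
    (∀ t : ℝ, 0 ≤ t → 0 < μ t) ∧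
    (∀ s t : ℝ, 0 ≤ s → s ≤ t →
      2 * ζ * (t - s) ≤ μ (t ^ 2) * t - μ (s ^ 2) * s ∧
      μ (t ^ 2) * t - μ (s ^ 2) * s ≤ (2 * ζ + k * γ) * (t - s)) := by
  have hc : (0:ℝ) < (k ^ 2)⁻¹ := by positivity
  have hsq : ∀ x : ℝ, 0 ≤ x → 0 < Real.sqrt (x + (k ^ 2)⁻¹) := by
    intro x hx
    exact Real.sqrt_pos.mpr (by linarith)
  refine ⟨?_, ?_, ?_, ?_⟩
  · -- ContDiffOn
    have : ContDiffOn ℝ 1 (fun t => γ / Real.sqrt (t + (k ^ 2)⁻¹) + 2 * ζ) (Set.Ici 0) := by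
      intro x hx
      have hx0 : (0:ℝ) ≤ x := hx
      have hpos : 0 < x + (k ^ 2)⁻¹ := by linarith
      have hsqrt : ContDiffAt ℝ 1 (fun t : ℝ => Real.sqrt (t + (k ^ 2)⁻¹)) x :=
        (Real.contDiffAt_sqrt hpos.ne').comp x (contDiffAt_id.add contDiffAt_const)
      exact ((contDiffAt_const.div hsqrt (hsq x hx0).ne').add contDiffAt_const).contDiffWithinAt
    exact this.congr (fun t _ => hμ t)
  · -- AntitoneOn
    intro a ha b hb hab
    rw [hμ, hμ]
    have h1 : Real.sqrt (a + (k ^ 2)⁻¹) ≤ Real.sqrt (b + (k ^ 2)⁻¹) :=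
      Real.sqrt_le_sqrt (by linarith)
    gcongr
    exact hsq a ha
  · -- positivity
    intro t ht
    rw [hμ]
    positivity
  · -- (M2)
    intro s t hs hst
    have ht : (0:ℝ) ≤ t := le_trans hs hst
    set A := Real.sqrt (t ^ 2 + (k ^ 2)⁻¹) with hAdef
    set B := Real.sqrt (s ^ 2 + (k ^ 2)⁻¹) with hBdef
    have hA0 : 0 < A := hsq _ (by positivity)
    have hB0 : 0 < B := hsq _ (by positivity)
    have hA2 : A ^ 2 = t ^ 2 + (k ^ 2)⁻¹ := Real.sq_sqrt (by positivity)
    have hB2 : B ^ 2 = s ^ 2 + (k ^ 2)⁻¹ := Real.sq_sqrt (by positivity)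
    have hBA : B ≤ A := Real.sqrt_le_sqrt (by nlinarith)
    have hAk : k⁻¹ ≤ A := by
      have : Real.sqrt ((k ^ 2)⁻¹) ≤ A := Real.sqrt_le_sqrt (by nlinarith)
      rwa [Real.sqrt_inv, Real.sqrt_sq hk.le] at this
    -- key monotonicity: s*A ≤ t*B
    have hst2 : s ^ 2 ≤ t ^ 2 := by nlinarith
    have hkey : s * A ≤ t * B := by
      have e1 : (s * A) ^ 2 = s ^ 2 * (t ^ 2 + (k ^ 2)⁻¹) := by rw [mul_pow, hA2]
      have e2 : (t * B) ^ 2 = t ^ 2 * (s ^ 2 + (k ^ 2)⁻¹) := by rw [mul_pow, hB2]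
      have hsq2 : (s * A) ^ 2 ≤ (t * B) ^ 2 := by
        rw [e1, e2]; nlinarith
      have h1 : 0 ≤ s * A := by positivity
      have h2 : 0 ≤ t * B := by positivity
      nlinarith [sq_nonneg (s * A - t * B), sq_nonneg (s * A + t * B)]
    have hdiv : s / B ≤ t / A := (div_le_div_iff₀ hB0 hA0).mpr hkey
    have hre : μ (t ^ 2) * t - μ (s ^ 2) * s
        = γ * (t / A) - γ * (s / B) + 2 * ζ * (t - s) := by
      rw [hμ, hμ, ← hAdef, ← hBdef]
      ring
    constructor
    · rw [hre]
      have := mul_le_mul_of_nonneg_left hdiv hγ.le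
      linarith
    · rw [hre]
      -- t/A - s/B ≤ (t-s)/A ≤ k*(t-s)
      have h1 : s / A ≤ s / B := div_le_div_of_nonneg_left hs hB0 hBA
      have h2 : t / A - s / A ≤ k * (t - s) := by
        rw [div_sub_div_same, div_le_iff₀ hA0]
        have hkA : 1 ≤ k * A := by
          have := mul_le_mul_of_nonneg_left hAk hk.le
          rwa [mul_inv_cancel₀ hk.ne'] at this
        nlinarith [mul_nonneg (sub_nonneg.mpr hst) (sub_nonneg.mpr hkA)]
      have h3 : t / A - s / B ≤ k * (t - s) := by linarith
      calc γ * (t / A) - γ * (s / B) + 2 * ζ * (t - s)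
          = γ * (t / A - s / B) + 2 * ζ * (t - s) := by ring
        _ ≤ γ * (k * (t - s)) + 2 * ζ * (t - s) :=
            add_le_add_left (mul_le_mul_of_nonneg_left h3 hγ.le) _
        _ = (2 * ζ + k * γ) * (t - s) := by ring
end
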